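/- In the formal power series completion of U_h(sl₂) (or as an identity of all coefficients of divided-power monomials), the product e^y ⋆ e^x of the exponentials of y and x equals e^{x·e^{2h}} · e^y; equivalently, for all a, b, c ∈ ℕ the coefficient of (x^a/a!)(y^b/b!)(h^c/c!) in the normally-ordered expansion of e^y e^x is (2a)^c, i.e. (y^B/B!)(x^a/a!) summed appropriately gives ∑_{a,b,c} (2a)^c (x^a/a!)(y^b/b!)(h^c/c!). -/

import Mathlib

namespace UhSl2

/-- Generators of `U_h(sl₂)`. -/
inductive Gen : Type | x | y | z | h

variable (K : Type*) [Field K]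

open FreeAlgebra in
/-- Defining relations of `U_h(sl₂)`: `h` is central, `yx = xy + 2xh`,
`zx = xz - yh`, `zy = yz + 2zh`. -/
inductive Rel : FreeAlgebra K Gen → FreeAlgebra K Gen → Prop
  | yx : Rel (ι K Gen.y * ι K Gen.x) (ι K Gen.x * ι K Gen.y + 2 * (ι K Gen.x * ι K Gen.h))
  | zx : Rel (ι K Gen.z * ι K Gen.x) (ι K Gen.x * ι K Gen.z - ι K Gen.y * ι K Gen.h)
  | zy : Rel (ι K Gen.z * ι K Gen.y) (ι K Gen.y * ι K Gen.z + 2 * (ι K Gen.z * ι K Gen.h))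
  | hx : Rel (ι K Gen.h * ι K Gen.x) (ι K Gen.x * ι K Gen.h)
  | hy : Rel (ι K Gen.h * ι K Gen.y) (ι K Gen.y * ι K Gen.h)
  | hz : Rel (ι K Gen.h * ι K Gen.z) (ι K Gen.z * ι K Gen.h)

/-- The homogeneous universal enveloping algebra `U_h(sl₂)`. -/
abbrev Uh := RingQuot (Rel K)

noncomputable def X : Uh K := RingQuot.mkAlgHom K (Rel K) (FreeAlgebra.ι K Gen.x)
noncomputable def Y : Uh K := RingQuot.mkAlgHom K (Rel K) (FreeAlgebra.ι K Gen.y)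
noncomputable def Z : Uh K := RingQuot.mkAlgHom K (Rel K) (FreeAlgebra.ι K Gen.z)
noncomputable def H : Uh K := RingQuot.mkAlgHom K (Rel K) (FreeAlgebra.ι K Gen.h)

/-- Divided power `u^n / n!`. -/
noncomputable def dp (n : ℕ) (u : Uh K) : Uh K := (n.factorial : K)⁻¹ • u ^ n

end UhSl2

namespace UhSl2
variable (K : Type*) [Field K]

lemma comm_hx : H K * X K = X K * H K := by
  have := RingQuot.mkAlgHom_rel K (Rel.hx (K := K))
  simpa [X, H, map_mul] using this

lemma comm_hy : H K * Y K = Y K * H K := by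
  have := RingQuot.mkAlgHom_rel K (Rel.hy (K := K))
  simpa [Y, H, map_mul] using this

lemma rel_yx : Y K * X K = X K * Y K + 2 * (X K * H K) := by
  have := RingQuot.mkAlgHom_rel K (Rel.yx (K := K))
  simpa [X, Y, H, map_mul, map_add, map_ofNat] using this

lemma two_mul_eq_smul (u : Uh K) : (2 : Uh K) * u = (2 : K) • u := by
  rw [← map_ofNat (algebraMap K (Uh K)) 2, ← Algebra.smul_def]

lemma y_mul_pow_x (a : ℕ) :
    Y K * (X K) ^ a = (X K) ^ a * Y K + (2 * (a : K)) • ((X K) ^ a * H K) := by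
  induction a with
  | zero => simp
  | succ n ih =>
    have cHX : Commute (H K) (X K) := comm_hx K
    have hx : H K * (X K) ^ n = (X K) ^ n * H K := (cHX.pow_right n).eq
    rw [pow_succ', ← mul_assoc, rel_yx, add_mul, mul_assoc, ih, mul_assoc, mul_assoc, hx]
    push_cast
    rw [mul_add, mul_smul_comm,
      show (2:K) * ((n:K)+1) = 2*(n:K) + 2 by ring, add_smul, two_mul_eq_smul]
    simp [mul_assoc, add_assoc]

lemma pow_y_mul_pow_x (a b : ℕ) :
    (Y K) ^ b * (X K) ^ a = (X K) ^ a * (Y K + (2 * (a : K)) • H K) ^ b := by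
  induction b with
  | zero => simp
  | succ n ih =>
    rw [pow_succ', mul_assoc, ih, ← mul_assoc, y_mul_pow_x, pow_succ' _ n, ← mul_assoc]
    congr 1
    rw [mul_add, mul_smul_comm]

end UhSl2

open Finset
open UhSl2
/-- Coefficient form of `e^y ⋆ e^x = e^{x e^{2h}} e^y` in the formal completion of
`U_h(sl₂)`: the term `(y^b/b!)(x^a/a!)` of `e^y ⋆ e^x` expands in normal order with
coefficient `(2a)^c` on each divided-power monomial `(x^a/a!)(y^{b-c}/(b-c)!)(h^c/c!)`,
which is exactly the coefficient family of `e^{x e^{2h}} e^y`. -/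
theorem exp_y_star_exp_x (K : Type*) [Field K] [CharZero K] (a b : ℕ) :
    dp K b (Y K) * dp K a (X K) =
      ∑ c ∈ Finset.range (b + 1),
        ((2 * (a : K)) ^ c) • (dp K a (X K) * dp K (b - c) (Y K) * dp K c (H K)) := by
  have cYH0 : Commute (Y K) (H K) := (comm_hy K).symm
  have cYH : Commute (Y K) ((2 * (a : K)) • H K) := cYH0.smul_right _
  rw [dp, dp, smul_mul_smul_comm, pow_y_mul_pow_x, cYH.add_pow, Finset.mul_sum,
    Finset.smul_sum, ← Finset.sum_range_reflect]
  refine Finset.sum_congr rfl fun m hm => ?_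
  have hmb : m ≤ b := Nat.lt_succ_iff.mp (Finset.mem_range.mp hm)
  simp only [Nat.add_sub_cancel, Nat.sub_sub_self hmb]
  have hcast : ((b.choose m : ℕ) : Uh K) = (b.choose m : K) • (1 : Uh K) := by
    rw [← map_natCast (algebraMap K (Uh K)), Algebra.algebraMap_eq_smul_one]
  rw [Nat.choose_symm hmb, hcast]
  simp only [dp, smul_pow, smul_mul_assoc, mul_smul_comm, smul_smul, mul_one, mul_assoc]
  congr 1
  have key : ((b.choose m : K)) * m.factorial * (b - m).factorial = b.factorial := by
    exact_mod_cast congrArg (Nat.cast : ℕ → K) (Nat.choose_mul_factorial_mul_factorial hmb)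
  have h1 : (b.factorial : K) ≠ 0 := Nat.cast_ne_zero.mpr b.factorial_ne_zero
  field_simp
  have ha : (a.factorial : K) ≠ 0 := Nat.cast_ne_zero.mpr a.factorial_ne_zero
  have hm1 : (m.factorial : K) ≠ 0 := Nat.cast_ne_zero.mpr m.factorial_ne_zero
  have hbm : ((b - m).factorial : K) ≠ 0 := Nat.cast_ne_zero.mpr (b - m).factorial_ne_zero
  rw [div_eq_div_iff ha (mul_ne_zero (mul_ne_zero ha hm1) hbm)]
  linear_combination (2 * (a:K)) ^ m * (a.factorial : K) * key
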